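/- Let N ≥ 2, let ε ≥ 0, and let s*, s' : Fin N → ℝ satisfy |s*(j) − s*(k)| > 2ε for all j ≠ k and |s'(j) − s*(j)| ≤ ε for all j. Then for every injective reference score vector s : Fin N → ℝ, SROCC(s', s) = SROCC(s*, s), where SROCC(u, v) = 1 − (6 / (N(N² − 1))) · Σ_j (r(u)(j) − r(v)(j))² for injective u, v with descending rank vectors r(u), r(v). -/
import Mathlib


/-- Descending rank vector: `rankVec s j = 1 + #{k | s k > s j}`. -/
noncomputable def rankVec {N : ℕ} (s : Fin N → ℝ) : Fin N → ℝ :=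
  fun j => 1 + (Finset.univ.filter (fun k => s k > s j)).card

/-- Spearman's rank-order correlation coefficient between two score vectors,
computed from their descending rank vectors. -/
noncomputable def srocc {N : ℕ} (u v : Fin N → ℝ) : ℝ :=
  1 - 6 / (N * ((N : ℝ) ^ 2 - 1)) * ∑ j : Fin N, (rankVec u j - rankVec v j) ^ 2

/-- If the target scores `s*` have all pairwise gaps greater than `2ε` and the
predicted scores `s'` are within `ε` of `s*` coordinatewise, then for every injective
reference vector `s`, the achieved SROCC equals the ideal SROCC:
`SROCC(s', s) = SROCC(s*, s)`. -/
theorem srocc_stability {N : ℕ} (hN : 2 ≤ N) (ε : ℝ) (hε : 0 ≤ ε)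
    (sStar s' : Fin N → ℝ)
    (hgap : ∀ j k : Fin N, j ≠ k → 2 * ε < |sStar j - sStar k|)
    (hclose : ∀ j : Fin N, |s' j - sStar j| ≤ ε)
    (s : Fin N → ℝ) (hs : Function.Injective s) :
    srocc s' s = srocc sStar s := by
  have key : ∀ j k : Fin N, sStar k > sStar j → s' k > s' j := by
    intro j k h
    have hjk : j ≠ k := by rintro rfl; exact lt_irrefl _ h
    have hg : 2 * ε < sStar k - sStar j := by
      have := hgap k j hjk.symm
      rwa [abs_of_pos (by linarith)] at this
    have h1 := abs_le.mp (hclose j)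
    have h2 := abs_le.mp (hclose k)
    have := h1.2; have := h2.1
    linarith
  have hr : rankVec s' = rankVec sStar := by
    funext j
    unfold rankVec
    congr 2
    apply congrArg
    apply Finset.filter_congr
    intro k _
    constructor
    · intro h
      by_contra hnot
      push_neg at hnot
      rcases lt_or_eq_of_le hnot with hlt | heq
      · exact absurd h (not_lt.mpr (le_of_lt (key k j hlt)))
      · have hjk : k = j := by
          by_contra hne
          have := hgap k j hne
          rw [heq, sub_self, abs_zero] at this
          linarith
        subst hjk; exact lt_irrefl _ h
    · exact key j k
  unfold srocc
  rw [hr]
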